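/- arXiv:2512.13849 — 4 statements merged into one kernel-verified Lean document; each statement's English description precedes it below -/
import Mathlib

section
/- Let A be a finite nonempty set of reals, P = {x ∈ A−A : δ_A(x) ≥ |A|²/(11|A−A|)}, and R = {x ∈ A : |(x−A) ∩ P| ≥ (2/√11)|A|}. Then |R| ≥ ((10/11 − 2/√11)/(1 − 2/√11))·|A|; in particular |R| > |A|/2. -/
open Finset Pointwise

theorem stmt2 (A : Finset ℝ) (hA : A.Nonempty)
    (P R : Finset ℝ)
    (hP : P = (A - A).filter
      (fun x => (((A ×ˢ A).filter (fun p => x = p.1 - p.2)).card : ℝ) ≥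
        (A.card : ℝ) ^ 2 / (11 * ((A - A).card : ℝ))))
    (hR : R = A.filter
      (fun x => (((A.image (fun a => x - a)) ∩ P).card : ℝ) ≥
        (2 / Real.sqrt 11) * (A.card : ℝ))) :
    (R.card : ℝ) ≥ ((10 / 11 - 2 / Real.sqrt 11) / (1 - 2 / Real.sqrt 11)) * (A.card : ℝ) ∧
      (R.card : ℝ) > (A.card : ℝ) / 2 := by
  classical
  have hn0 : (0:ℝ) < A.card := by exact_mod_cast Finset.card_pos.mpr hA
  have hDne : (A - A).Nonempty := hA.sub hA
  have hd0 : (0:ℝ) < ((A - A).card : ℝ) := by exact_mod_cast Finset.card_pos.mpr hDne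
  set s := Real.sqrt 11 with hs
  have hs0 : (0:ℝ) < s := Real.sqrt_pos.mpr (by norm_num)
  have hs2 : s ^ 2 = 11 := Real.sq_sqrt (by norm_num)
  have hs3 : 3 < s := by nlinarith
  set c : ℝ := 2 / s with hc
  have hc0 : 0 < c := by positivity
  have hc23 : c < 2/3 := by rw [hc, div_lt_div_iff₀ hs0 (by norm_num)]; linarith
  have hc911 : c < 9/11 := by rw [hc, div_lt_div_iff₀ hs0 (by norm_num)]; linarith
  have h1c : (0:ℝ) < 1 - c := by linarith
  -- Step 1 : total count of differences
  have step1 : ∑ p ∈ A - A, ((A ×ˢ A).filter (fun q => p = q.1 - q.2)).card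
      = A.card ^ 2 := by
    have h := Finset.card_eq_sum_card_fiberwise
      (f := fun q : ℝ × ℝ => q.1 - q.2) (s := A ×ˢ A) (t := A - A)
      (fun q hq => by
        rw [Finset.mem_coe, Finset.mem_product] at hq
        exact Finset.mem_coe.mpr (Finset.sub_mem_sub hq.1 hq.2))
    rw [Finset.card_product, ← sq] at h
    rw [h]
    apply Finset.sum_congr rfl
    intro p _
    congr 1
    ext q
    simp [eq_comm]
  -- Step 2 : δ p counts x ∈ A with x - p ∈ A
  have step2 : ∀ p : ℝ, ((A ×ˢ A).filter (fun q => p = q.1 - q.2)).card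
      = (A.filter (fun x => x - p ∈ A)).card := by
    intro p
    apply Finset.card_bij (fun q _ => q.1)
    · intro q hq
      rw [Finset.mem_filter, Finset.mem_product] at hq
      rw [Finset.mem_filter]
      refine ⟨hq.1.1, ?_⟩
      have h2 := hq.2
      have : q.1 - p = q.2 := by rw [h2]; ring
      rw [this]
      exact hq.1.2
    · intro q hq q' hq' h
      rw [Finset.mem_filter, Finset.mem_product] at hq hq'
      have e1 := hq.2
      have e2 := hq'.2
      have : q.2 = q'.2 := by
        have : q.1 - q.2 = q'.1 - q'.2 := by rw [← e1, ← e2]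
        rw [h] at this
        linarith
      exact Prod.ext h this
    · intro x hx
      rw [Finset.mem_filter] at hx
      refine ⟨(x, x - p), ?_, rfl⟩
      rw [Finset.mem_filter, Finset.mem_product]
      exact ⟨⟨hx.1, hx.2⟩, by ring⟩
  -- membership in x - A
  have himg : ∀ x p : ℝ, p ∈ A.image (fun a => x - a) ↔ x - p ∈ A := by
    intro x p
    simp only [Finset.mem_image]
    constructor
    · rintro ⟨a, ha, h⟩
      have : x - p = a := by linarith
      rwa [this]
    · intro h
      exact ⟨x - p, h, by ring⟩
  -- Step 3 : double counting
  have step3 : ∑ x ∈ A, ((A.image (fun a => x - a)) ∩ P).card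
      = ∑ p ∈ P, ((A ×ˢ A).filter (fun q => p = q.1 - q.2)).card := by
    have h1 : ∀ x : ℝ, (A.image (fun a => x - a)) ∩ P
        = P.filter (fun p => p ∈ A.image (fun a => x - a)) := by
      intro x
      ext p
      simp [Finset.mem_inter, Finset.mem_filter, and_comm]
    calc ∑ x ∈ A, ((A.image (fun a => x - a)) ∩ P).card
        = ∑ x ∈ A, ∑ p ∈ P, if p ∈ A.image (fun a => x - a) then 1 else 0 := by
          apply Finset.sum_congr rfl
          intro x _
          rw [h1 x, Finset.card_filter]
      _ = ∑ p ∈ P, ∑ x ∈ A, if p ∈ A.image (fun a => x - a) then 1 else 0 :=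
          Finset.sum_comm
      _ = ∑ p ∈ P, (A.filter (fun x => p ∈ A.image (fun a => x - a))).card := by
          apply Finset.sum_congr rfl
          intro p _
          rw [Finset.card_filter]
      _ = ∑ p ∈ P, ((A ×ˢ A).filter (fun q => p = q.1 - q.2)).card := by
          apply Finset.sum_congr rfl
          intro p _
          rw [step2 p]
          apply congrArg
          apply Finset.filter_congr
          intro x _
          exact himg x p
  -- lower bound on the popular part
  have hPsub : P ⊆ A - A := by rw [hP]; exact Finset.filter_subset _ _
  have hbound : ∀ p ∈ (A - A) \ P,
      (((A ×ˢ A).filter (fun q => p = q.1 - q.2)).card : ℝ)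
        ≤ (A.card:ℝ)^2 / (11 * ((A - A).card:ℝ)) := by
    intro p hp
    rw [Finset.mem_sdiff] at hp
    by_contra h
    push_neg at h
    exact hp.2 (by rw [hP]; exact Finset.mem_filter.mpr ⟨hp.1, le_of_lt h⟩)
  have hsd : ∑ p ∈ (A - A) \ P, (((A ×ˢ A).filter (fun q => p = q.1 - q.2)).card : ℝ)
      ≤ (A.card:ℝ)^2 / 11 := by
    have h1 : ∑ p ∈ (A - A) \ P, (((A ×ˢ A).filter (fun q => p = q.1 - q.2)).card : ℝ)
        ≤ (((A - A) \ P).card : ℝ) * ((A.card:ℝ)^2 / (11 * ((A - A).card:ℝ))) := by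
      have := Finset.sum_le_card_nsmul ((A - A) \ P)
        (fun p => (((A ×ˢ A).filter (fun q => p = q.1 - q.2)).card : ℝ))
        ((A.card:ℝ)^2 / (11 * ((A - A).card:ℝ))) hbound
      simpa [nsmul_eq_mul] using this
    have h2 : (((A - A) \ P).card : ℝ) ≤ ((A - A).card : ℝ) := by
      exact_mod_cast Finset.card_le_card (Finset.sdiff_subset)
    have h3 : (0:ℝ) ≤ (A.card:ℝ)^2 / (11 * ((A - A).card:ℝ)) := by positivity
    have h4 : ((A - A).card : ℝ) * ((A.card:ℝ)^2 / (11 * ((A - A).card:ℝ)))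
        = (A.card:ℝ)^2 / 11 := by
      field_simp
    nlinarith [mul_le_mul_of_nonneg_right h2 h3]
  have htot : ∑ p ∈ A - A, (((A ×ˢ A).filter (fun q => p = q.1 - q.2)).card : ℝ)
      = (A.card:ℝ)^2 := by exact_mod_cast step1
  have hsplit : ∑ p ∈ (A - A) \ P, (((A ×ˢ A).filter (fun q => p = q.1 - q.2)).card : ℝ)
      + ∑ p ∈ P, (((A ×ˢ A).filter (fun q => p = q.1 - q.2)).card : ℝ)
      = ∑ p ∈ A - A, (((A ×ˢ A).filter (fun q => p = q.1 - q.2)).card : ℝ) :=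
    Finset.sum_sdiff hPsub
  have hPsum : (10/11) * (A.card:ℝ)^2
      ≤ ∑ p ∈ P, (((A ×ˢ A).filter (fun q => p = q.1 - q.2)).card : ℝ) := by
    rw [htot] at hsplit
    linarith
  -- rewrite as a sum over A
  have hAsum : (10/11) * (A.card:ℝ)^2
      ≤ ∑ x ∈ A, (((A.image (fun a => x - a)) ∩ P).card : ℝ) := by
    have : ∑ x ∈ A, (((A.image (fun a => x - a)) ∩ P).card : ℝ)
        = ∑ p ∈ P, (((A ×ˢ A).filter (fun q => p = q.1 - q.2)).card : ℝ) := by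
      exact_mod_cast step3
    rw [this]
    exact hPsum
  -- upper bound on the sum over A
  have hRsub : R ⊆ A := by rw [hR]; exact Finset.filter_subset _ _
  have hrle : (R.card : ℝ) ≤ (A.card : ℝ) := by
    exact_mod_cast Finset.card_le_card hRsub
  have hRbound : ∀ x ∈ R, (((A.image (fun a => x - a)) ∩ P).card : ℝ) ≤ (A.card : ℝ) := by
    intro x _
    have : ((A.image (fun a => x - a)) ∩ P).card ≤ A.card :=
      le_trans (Finset.card_le_card (Finset.inter_subset_left))
        (Finset.card_image_le)
    exact_mod_cast this
  have hNRbound : ∀ x ∈ A \ R,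
      (((A.image (fun a => x - a)) ∩ P).card : ℝ) ≤ c * (A.card : ℝ) := by
    intro x hx
    rw [Finset.mem_sdiff] at hx
    by_contra h
    push_neg at h
    exact hx.2 (by rw [hR]; exact Finset.mem_filter.mpr ⟨hx.1, le_of_lt h⟩)
  have hcard_sdiff : ((A \ R).card : ℝ) = (A.card : ℝ) - (R.card : ℝ) := by
    rw [Finset.card_sdiff_of_subset hRsub]
    have := Finset.card_le_card hRsub
    push_cast [Nat.cast_sub this]
    ring
  have hupper : ∑ x ∈ A, (((A.image (fun a => x - a)) ∩ P).card : ℝ)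
      ≤ (R.card:ℝ) * (A.card:ℝ) + ((A.card:ℝ) - (R.card:ℝ)) * (c * (A.card:ℝ)) := by
    have hsplit2 : ∑ x ∈ A \ R, (((A.image (fun a => x - a)) ∩ P).card : ℝ)
        + ∑ x ∈ R, (((A.image (fun a => x - a)) ∩ P).card : ℝ)
        = ∑ x ∈ A, (((A.image (fun a => x - a)) ∩ P).card : ℝ) :=
      Finset.sum_sdiff hRsub
    have h1 : ∑ x ∈ R, (((A.image (fun a => x - a)) ∩ P).card : ℝ)
        ≤ (R.card:ℝ) * (A.card:ℝ) := by
      have := Finset.sum_le_card_nsmul R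
        (fun x => (((A.image (fun a => x - a)) ∩ P).card : ℝ)) ((A.card:ℝ)) hRbound
      simpa [nsmul_eq_mul] using this
    have h2 : ∑ x ∈ A \ R, (((A.image (fun a => x - a)) ∩ P).card : ℝ)
        ≤ ((A.card:ℝ) - (R.card:ℝ)) * (c * (A.card:ℝ)) := by
      have := Finset.sum_le_card_nsmul (A \ R)
        (fun x => (((A.image (fun a => x - a)) ∩ P).card : ℝ)) (c * (A.card:ℝ)) hNRbound
      rw [← hcard_sdiff]
      simpa [nsmul_eq_mul] using this
    linarith
  have key : (10/11) * (A.card:ℝ)^2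
      ≤ (R.card:ℝ) * (A.card:ℝ) + ((A.card:ℝ) - (R.card:ℝ)) * (c * (A.card:ℝ)) :=
    le_trans hAsum hupper
  have part1 : (R.card : ℝ) ≥ ((10 / 11 - c) / (1 - c)) * (A.card : ℝ) := by
    rw [ge_iff_le, div_mul_eq_mul_div, div_le_iff₀ h1c]
    nlinarith [key, hn0, mul_pos hn0 hn0]
  refine ⟨part1, ?_⟩
  have hratio : (1:ℝ)/2 < (10 / 11 - c) / (1 - c) := by
    rw [lt_div_iff₀ h1c]
    linarith
  have := mul_lt_mul_of_pos_right hratio hn0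
  linarith
end

section
/- Let A be a finite set of reals, P = {x ∈ A−A : δ_A(x) ≥ |A|²/(11|A−A|)}, and let r ∈ A satisfy |(r−A) ∩ P| ≥ (2/√11)|A|. Then #{(a₁,a₂) ∈ A² : a₁−a₂ ∈ P, r−a₁ ∈ P, and r−a₂ ∈ P} ≥ (3/11)|A|². -/
open Finset Pointwise

set_option maxHeartbeats 2000000 in
theorem stmt3 (A : Finset ℝ)
    (P : Finset ℝ)
    (hP : P = (A - A).filter
      (fun x => (((A ×ˢ A).filter (fun p => x = p.1 - p.2)).card : ℝ) ≥
        (A.card : ℝ) ^ 2 / (11 * ((A - A).card : ℝ))))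
    (r : ℝ) (hr : r ∈ A)
    (hrich : (((A.image (fun a => r - a)) ∩ P).card : ℝ) ≥
      (2 / Real.sqrt 11) * (A.card : ℝ)) :
    ((((A ×ˢ A).filter
        (fun p => p.1 - p.2 ∈ P ∧ r - p.1 ∈ P ∧ r - p.2 ∈ P)).card : ℝ)) ≥
      (3 / 11) * (A.card : ℝ) ^ 2 := by
  rcases A.eq_empty_or_nonempty with hA | hA
  · subst hA; simp
  have hd : 0 < (A - A).card := Finset.card_pos.mpr (hA.sub hA)
  set n := A.card with hn
  set d := (A - A).card with hdd
  set S1 := (A ×ˢ A).filter (fun p : ℝ × ℝ => p.1 - p.2 ∈ P) with hS1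
  set Sr := (A ×ˢ A).filter (fun p : ℝ × ℝ => r - p.1 ∈ P ∧ r - p.2 ∈ P) with hSrdef
  set C := (A ×ˢ A).filter (fun p : ℝ × ℝ => ¬ (p.1 - p.2 ∈ P)) with hC
  -- Step 1: card C ≤ n^2/11
  have hsplit : S1.card + C.card = n * n := by
    rw [hS1, hC, Finset.card_filter_add_card_filter_not, Finset.card_product]
  have hfib : C.card = ∑ x ∈ (A - A) \ P,
      (C.filter (fun p : ℝ × ℝ => p.1 - p.2 = x)).card := by
    apply Finset.card_eq_sum_card_fiberwise
    intro p hp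
    simp only [hC, Finset.mem_coe, Finset.mem_filter, Finset.mem_product] at hp
    rw [Finset.mem_coe, Finset.mem_sdiff]
    exact ⟨Finset.mem_sub.mpr ⟨p.1, hp.1.1, p.2, hp.1.2, rfl⟩, hp.2⟩
  have hCle : (C.card : ℝ) ≤ (n : ℝ) ^ 2 / 11 := by
    have hterm : ∀ x ∈ (A - A) \ P,
        ((C.filter (fun p : ℝ × ℝ => p.1 - p.2 = x)).card : ℝ)
          ≤ (n : ℝ) ^ 2 / (11 * (d : ℝ)) := by
      intro x hx
      rw [Finset.mem_sdiff] at hx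
      have hxP : ¬ ((((A ×ˢ A).filter (fun p => x = p.1 - p.2)).card : ℝ) ≥
          (n : ℝ) ^ 2 / (11 * (d : ℝ))) := by
        intro h
        exact hx.2 (hP ▸ Finset.mem_filter.mpr ⟨hx.1, h⟩)
      push_neg at hxP
      have hsub : (C.filter (fun p : ℝ × ℝ => p.1 - p.2 = x)).card ≤
          ((A ×ˢ A).filter (fun p => x = p.1 - p.2)).card := by
        apply Finset.card_le_card
        intro p hp
        simp only [hC, Finset.mem_filter] at hp ⊢
        exact ⟨hp.1.1, hp.2.symm⟩
      calc ((C.filter (fun p : ℝ × ℝ => p.1 - p.2 = x)).card : ℝ)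
          ≤ (((A ×ˢ A).filter (fun p => x = p.1 - p.2)).card : ℝ) := by exact_mod_cast hsub
        _ ≤ (n : ℝ) ^ 2 / (11 * (d : ℝ)) := le_of_lt hxP
    have hsum : (C.card : ℝ) ≤ (((A - A) \ P).card : ℝ) * ((n : ℝ) ^ 2 / (11 * (d : ℝ))) := by
      rw [hfib]
      push_cast
      calc (∑ x ∈ (A - A) \ P, ((C.filter (fun p : ℝ × ℝ => p.1 - p.2 = x)).card : ℝ))
          ≤ ∑ _x ∈ (A - A) \ P, (n : ℝ) ^ 2 / (11 * (d : ℝ)) :=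
            Finset.sum_le_sum hterm
        _ = (((A - A) \ P).card : ℝ) * ((n : ℝ) ^ 2 / (11 * (d : ℝ))) := by
            rw [Finset.sum_const, nsmul_eq_mul]
    have hcard : (((A - A) \ P).card : ℝ) ≤ (d : ℝ) := by
      exact_mod_cast Finset.card_le_card (Finset.sdiff_subset)
    have hdpos : (0 : ℝ) < (d : ℝ) := by exact_mod_cast hd
    have hnn : (0 : ℝ) ≤ (n : ℝ) ^ 2 / (11 * (d : ℝ)) :=
      div_nonneg (sq_nonneg _) (mul_nonneg (by norm_num) (Nat.cast_nonneg d))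
    calc (C.card : ℝ) ≤ (((A - A) \ P).card : ℝ) * ((n : ℝ) ^ 2 / (11 * (d : ℝ))) := hsum
      _ ≤ (d : ℝ) * ((n : ℝ) ^ 2 / (11 * (d : ℝ))) := by
          exact mul_le_mul_of_nonneg_right hcard hnn
      _ = (n : ℝ) ^ 2 / 11 := by
          have hdne : (d : ℝ) ≠ 0 := ne_of_gt hdpos
          rw [← div_div, mul_comm, div_mul_cancel₀ _ hdne]
  have hS1ge : (S1.card : ℝ) ≥ (n : ℝ) ^ 2 - (n : ℝ) ^ 2 / 11 := by
    have : (S1.card : ℝ) + (C.card : ℝ) = (n : ℝ) * (n : ℝ) := by exact_mod_cast hsplit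
    nlinarith [hCle]
  -- Step 2: Sr = B ×ˢ B with card B ≥ (2/√11) n
  set B := A.filter (fun a => r - a ∈ P) with hB
  have hinj : Set.InjOn (fun a : ℝ => r - a) B := by
    intro a _ b _ h
    simpa using h
  have himg : (A.image (fun a => r - a)) ∩ P = B.image (fun a => r - a) := by
    ext x
    simp only [Finset.mem_inter, Finset.mem_image, hB, Finset.mem_filter]
    constructor
    · rintro ⟨⟨a, ha, rfl⟩, hx⟩; exact ⟨a, ⟨ha, hx⟩, rfl⟩
    · rintro ⟨a, ⟨ha, hx⟩, rfl⟩; exact ⟨⟨a, ha, rfl⟩, hx⟩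
  have hBcard : ((B.card : ℝ)) ≥ (2 / Real.sqrt 11) * (n : ℝ) := by
    rw [himg, Finset.card_image_of_injOn hinj] at hrich
    exact hrich
  have hSrB : Sr = B ×ˢ B := by
    ext p
    simp only [hSrdef, hB, Finset.mem_filter, Finset.mem_product]
    tauto
  have hsqrt : Real.sqrt 11 > 0 := Real.sqrt_pos.mpr (by norm_num)
  have hBnn : (0 : ℝ) ≤ (2 / Real.sqrt 11) * (n : ℝ) :=
    mul_nonneg (div_nonneg (by norm_num) hsqrt.le) (Nat.cast_nonneg n)
  have hSrge : (Sr.card : ℝ) ≥ (4 / 11) * (n : ℝ) ^ 2 := by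
    have h1 : (Sr.card : ℝ) = (B.card : ℝ) * (B.card : ℝ) := by
      rw [hSrB, Finset.card_product]; push_cast; ring
    have h2 : ((2 / Real.sqrt 11) * (n : ℝ)) * ((2 / Real.sqrt 11) * (n : ℝ))
        ≤ (B.card : ℝ) * (B.card : ℝ) := mul_le_mul hBcard hBcard hBnn (Nat.cast_nonneg B.card)
    have h3 : ((2 / Real.sqrt 11) * (n : ℝ)) * ((2 / Real.sqrt 11) * (n : ℝ))
        = (4 / 11) * (n : ℝ) ^ 2 := by
      have h11 : Real.sqrt 11 * Real.sqrt 11 = 11 :=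
        Real.mul_self_sqrt (by norm_num)
      have hq : (2 / Real.sqrt 11) * (2 / Real.sqrt 11) = 4 / 11 := by
        rw [div_mul_div_comm, h11]; norm_num
      calc ((2 / Real.sqrt 11) * (n : ℝ)) * ((2 / Real.sqrt 11) * (n : ℝ))
          = ((2 / Real.sqrt 11) * (2 / Real.sqrt 11)) * ((n : ℝ) * (n : ℝ)) := by ring
        _ = (4 / 11) * (n : ℝ) ^ 2 := by rw [hq]; ring
    linarith [h1 ▸ h2, h3 ▸ h2]
  -- Step 3: inclusion-exclusion
  have hGeq : (A ×ˢ A).filter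
      (fun p : ℝ × ℝ => p.1 - p.2 ∈ P ∧ r - p.1 ∈ P ∧ r - p.2 ∈ P) = S1 ∩ Sr := by
    rw [hS1, hSrdef, ← Finset.filter_and]
  have hunion : (S1 ∪ Sr).card ≤ n * n := by
    rw [← Finset.card_product A A]
    apply Finset.card_le_card
    apply Finset.union_subset <;> exact Finset.filter_subset _ _
  have hie : S1.card + Sr.card = (S1 ∪ Sr).card + (S1 ∩ Sr).card :=
    (Finset.card_union_add_card_inter S1 Sr).symm
  rw [hGeq]
  have hieR : (S1.card : ℝ) + (Sr.card : ℝ) = ((S1 ∪ Sr).card : ℝ) + ((S1 ∩ Sr).card : ℝ) := by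
    exact_mod_cast hie
  have hunionR : ((S1 ∪ Sr).card : ℝ) ≤ (n : ℝ) * (n : ℝ) := by exact_mod_cast hunion
  nlinarith [hS1ge, hSrge]
end

section
/- There exists a constant c > 0 such that for every finite set A of reals, with P = {x ∈ A−A : δ_A(x) ≥ |A|²/(11|A−A|)}, one has |A|⁶ ≤ c · E₃(A) · Σ_{x∈P} δ_P(x), where δ_P(x) = #{(p₁,p₂) ∈ P² : x = p₁−p₂}. -/
open Finset Pointwise

private noncomputable def dd (A : Finset ℝ) (x : ℝ) : ℝ :=
  (((A ×ˢ A).filter (fun p => x = p.1 - p.2)).card : ℝ)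

private noncomputable def gg (A : Finset ℝ) (z : ℝ × ℝ) : ℝ :=
  ((A.filter (fun b => z.1 + b ∈ A ∧ z.2 + b ∈ A)).card : ℝ)

private lemma boole_mul_boole (c₁ c₂ : Prop) [Decidable c₁] [Decidable c₂] :
    (if c₁ then (1:ℝ) else 0) * (if c₂ then (1:ℝ) else 0) = if c₁ ∧ c₂ then (1:ℝ) else 0 := by
  by_cases c₁ <;> by_cases c₂ <;> simp [*]

private lemma fiberlem (A : Finset ℝ) (F : ℝ → ℝ) :
    ∑ p ∈ A ×ˢ A, F (p.1 - p.2) = ∑ x ∈ A - A, dd A x * F x := by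
  have hmaps : ∀ p ∈ A ×ˢ A, p.1 - p.2 ∈ A - A := by
    intro p hp
    obtain ⟨h1, h2⟩ := Finset.mem_product.1 hp
    exact Finset.sub_mem_sub h1 h2
  rw [← Finset.sum_fiberwise_of_maps_to hmaps (fun p => F (p.1 - p.2))]
  refine Finset.sum_congr rfl fun x hx => ?_
  have hfe : (A ×ˢ A).filter (fun p => p.1 - p.2 = x)
      = (A ×ˢ A).filter (fun p => x = p.1 - p.2) :=
    Finset.filter_congr (fun p _ => by constructor <;> exact Eq.symm)
  calc ∑ p ∈ (A ×ˢ A).filter (fun p => p.1 - p.2 = x), F (p.1 - p.2)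
      = ∑ p ∈ (A ×ˢ A).filter (fun p => p.1 - p.2 = x), F x :=
        Finset.sum_congr rfl (fun p hp => by rw [(Finset.mem_filter.1 hp).2])
    _ = _ := by rw [Finset.sum_const, hfe, nsmul_eq_mul]; rfl

private lemma covlem (Q A : Finset ℝ) (b : ℝ) (h : ℝ → ℝ) :
    ∑ p ∈ Q, (if p + b ∈ A then (1:ℝ) else 0) * h p
      = ∑ a ∈ A, (if a - b ∈ Q then (1:ℝ) else 0) * h (a - b) := by
  simp only [boole_mul]
  rw [← Finset.sum_filter, ← Finset.sum_filter]
  refine Finset.sum_nbij' (i := fun p => p + b) (j := fun a => a - b) ?_ ?_ ?_ ?_ ?_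
  · intro p hp; simp only [Finset.mem_filter] at hp ⊢
    exact ⟨hp.2, by simpa using hp.1⟩
  · intro a ha; simp only [Finset.mem_filter] at ha ⊢
    exact ⟨ha.2, by simpa using ha.1⟩
  · intro p _; ring
  · intro a _; ring
  · intro p _; simp

private lemma sum_dd (A : Finset ℝ) : ∑ x ∈ A - A, dd A x = (A.card : ℝ) ^ 2 := by
  have := fiberlem A (fun _ => 1)
  simp only [mul_one] at this
  rw [← this, Finset.sum_const, Finset.card_product, nsmul_eq_mul]
  push_cast; ring

private lemma sigma_eq (A P : Finset ℝ) (hsub : P ⊆ A - A) :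
    ∑ x ∈ P, dd A x = ∑ b ∈ A, ((A.filter (fun a => a - b ∈ P)).card : ℝ) := by
  have h1 : ∀ b : ℝ, ((A.filter (fun a => a - b ∈ P)).card : ℝ)
      = ∑ a ∈ A, (if a - b ∈ P then (1:ℝ) else 0) := by
    intro b; rw [Finset.sum_boole]
  simp only [h1]
  rw [Finset.sum_comm]
  have h2 : ∑ a ∈ A, ∑ b ∈ A, (if a - b ∈ P then (1:ℝ) else 0)
      = ∑ p ∈ A ×ˢ A, (if p.1 - p.2 ∈ P then (1:ℝ) else 0) := (Finset.sum_product' _ _ _).symm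
  rw [h2, fiberlem A (fun x => if x ∈ P then (1:ℝ) else 0)]
  have h3 : ∀ x, dd A x * (if x ∈ P then (1:ℝ) else 0) = if x ∈ P then dd A x else 0 := by
    intro x; split_ifs <;> simp
  simp only [h3]
  rw [← Finset.sum_filter, Finset.filter_mem_eq_inter, Finset.inter_eq_right.2 hsub]

private lemma f_eq (A P : Finset ℝ) (b : ℝ) :
    ((A.filter (fun a => a - b ∈ P)).card : ℝ) = ∑ p ∈ P, (if p + b ∈ A then (1:ℝ) else 0) := by
  have := covlem P A b (fun _ => 1)
  simp only [mul_one] at this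
  rw [this, Finset.sum_boole]

private lemma q_eq (A P : Finset ℝ) :
    ∑ b ∈ A, ((A.filter (fun a => a - b ∈ P)).card : ℝ) ^ 2 = ∑ z ∈ P ×ˢ P, gg A z := by
  have h1 : ∀ b : ℝ, ((A.filter (fun a => a - b ∈ P)).card : ℝ) ^ 2
      = ∑ z ∈ P ×ˢ P, (if z.1 + b ∈ A then (1:ℝ) else 0) * (if z.2 + b ∈ A then (1:ℝ) else 0) := by
    intro b
    rw [f_eq A P b, sq, Finset.sum_mul_sum, ← Finset.sum_product']
  simp only [h1]
  rw [Finset.sum_comm]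
  refine Finset.sum_congr rfl fun z hz => ?_
  simp only [boole_mul_boole]
  rw [Finset.sum_boole]; rfl

private lemma S_card (P : Finset ℝ) :
    (((P ×ˢ P).filter (fun z => z.1 - z.2 ∈ P)).card : ℝ)
      = ∑ x ∈ P, (((P ×ˢ P).filter (fun p => x = p.1 - p.2)).card : ℝ) := by
  have h : ((P ×ˢ P).filter (fun z => z.1 - z.2 ∈ P)).card
      = ∑ x ∈ P, ((P ×ˢ P).filter (fun p => x = p.1 - p.2)).card := by
    rw [Finset.card_eq_sum_card_fiberwise
      (s := (P ×ˢ P).filter (fun z => z.1 - z.2 ∈ P)) (f := fun z : ℝ × ℝ => z.1 - z.2) (t := P)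
      (fun z hz => (Finset.mem_filter.1 hz).2)]
    refine Finset.sum_congr rfl fun x hx => ?_
    congr 1
    rw [Finset.filter_filter]
    refine Finset.filter_congr fun z hz => ?_
    constructor
    · rintro ⟨-, h2⟩; exact h2.symm
    · rintro rfl; exact ⟨hx, rfl⟩
  rw [h]; push_cast; rfl

private lemma m_eq (A : Finset ℝ) {b b' : ℝ} (hb : b ∈ A) :
    (((A - A).filter (fun p => p + b ∈ A ∧ p + b' ∈ A)).card : ℝ) = dd A (b - b') := by
  rw [dd]
  congr 1
  refine Finset.card_nbij' (i := fun p => (p + b, p + b')) (j := fun u => u.1 - b)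
    ?_ ?_ ?_ ?_
  · intro p hp
    simp only [Finset.mem_coe, Finset.mem_filter, Finset.mem_product] at hp ⊢
    exact ⟨⟨hp.2.1, hp.2.2⟩, by ring⟩
  · intro u hu
    simp only [Finset.mem_coe, Finset.mem_filter, Finset.mem_product] at hu ⊢
    obtain ⟨⟨hu1, hu2⟩, heq⟩ := hu
    refine ⟨Finset.sub_mem_sub hu1 hb, ?_, ?_⟩
    · simpa using hu1
    · have : u.1 - b + b' = u.2 := by linarith [heq]
      simpa [this] using hu2
  · intro p _; simp
  · intro u hu
    simp only [Finset.mem_coe, Finset.mem_filter, Finset.mem_product] at hu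
    obtain ⟨⟨hu1, hu2⟩, heq⟩ := hu
    have h1 : u.1 - b + b = u.1 := by ring
    have h2 : u.1 - b + b' = u.2 := by linarith
    simp [h1, h2]

private lemma sum_gsq (A : Finset ℝ) :
    ∑ z ∈ (A - A) ×ˢ (A - A), gg A z ^ 2 = ∑ x ∈ A - A, dd A x ^ 3 := by
  have hg : ∀ z : ℝ × ℝ, gg A z
      = ∑ b ∈ A, (if z.1 + b ∈ A ∧ z.2 + b ∈ A then (1:ℝ) else 0) := by
    intro z; rw [gg, Finset.sum_boole]
  have hsq : ∀ z : ℝ × ℝ, gg A z ^ 2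
      = ∑ w ∈ A ×ˢ A, ((if z.1 + w.1 ∈ A ∧ z.2 + w.1 ∈ A then (1:ℝ) else 0)
          * (if z.1 + w.2 ∈ A ∧ z.2 + w.2 ∈ A then (1:ℝ) else 0)) := by
    intro z; rw [hg, sq, Finset.sum_mul_sum, ← Finset.sum_product']
  simp only [hsq]
  rw [Finset.sum_comm]
  have key : ∀ w ∈ A ×ˢ A,
      (∑ z ∈ (A - A) ×ˢ (A - A),
        ((if z.1 + w.1 ∈ A ∧ z.2 + w.1 ∈ A then (1:ℝ) else 0)
          * (if z.1 + w.2 ∈ A ∧ z.2 + w.2 ∈ A then (1:ℝ) else 0)))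
      = dd A (w.1 - w.2) ^ 2 := by
    intro w hw
    obtain ⟨hw1, hw2⟩ := Finset.mem_product.1 hw
    have hfac : ∀ z : ℝ × ℝ,
        ((if z.1 + w.1 ∈ A ∧ z.2 + w.1 ∈ A then (1:ℝ) else 0)
          * (if z.1 + w.2 ∈ A ∧ z.2 + w.2 ∈ A then (1:ℝ) else 0))
        = ((if z.1 + w.1 ∈ A ∧ z.1 + w.2 ∈ A then (1:ℝ) else 0)
          * (if z.2 + w.1 ∈ A ∧ z.2 + w.2 ∈ A then (1:ℝ) else 0)) := by
      intro z; simp only [← boole_mul_boole]; ring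
    simp only [hfac]
    rw [Finset.sum_product' (A - A) (A - A)
      (fun p1 p2 => (if p1 + w.1 ∈ A ∧ p1 + w.2 ∈ A then (1:ℝ) else 0)
        * (if p2 + w.1 ∈ A ∧ p2 + w.2 ∈ A then (1:ℝ) else 0)), ← Finset.sum_mul_sum]
    have hm : ∑ p ∈ A - A, (if p + w.1 ∈ A ∧ p + w.2 ∈ A then (1:ℝ) else 0)
        = dd A (w.1 - w.2) := by
      rw [Finset.sum_boole]
      exact m_eq A hw1
    rw [hm, sq]
  rw [Finset.sum_congr rfl key, fiberlem A (fun x => dd A x ^ 2)]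
  exact Finset.sum_congr rfl fun x _ => by ring

private lemma bad_le (A P : Finset ℝ) :
    ∑ z ∈ (P ×ˢ P).filter (fun z => z.1 - z.2 ∉ P), gg A z
      ≤ (A.card : ℝ) * ∑ x ∈ (A - A).filter (fun x => x ∉ P), dd A x := by
  have hg : ∀ z : ℝ × ℝ, gg A z
      = ∑ b ∈ A, ((if z.1 + b ∈ A then (1:ℝ) else 0) * (if z.2 + b ∈ A then (1:ℝ) else 0)) := by
    intro z; rw [gg]; simp only [boole_mul_boole]; rw [Finset.sum_boole]
  simp only [hg]
  rw [Finset.sum_comm]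
  have hb : ∀ b ∈ A,
      (∑ z ∈ (P ×ˢ P).filter (fun z => z.1 - z.2 ∉ P),
        ((if z.1 + b ∈ A then (1:ℝ) else 0) * (if z.2 + b ∈ A then (1:ℝ) else 0)))
      ≤ ∑ w ∈ A ×ˢ A, (if w.1 - w.2 ∉ P then (1:ℝ) else 0) := by
    intro b _
    have h1 : ∑ z ∈ (P ×ˢ P).filter (fun z => z.1 - z.2 ∉ P),
        ((if z.1 + b ∈ A then (1:ℝ) else 0) * (if z.2 + b ∈ A then (1:ℝ) else 0))
        = ((((P ×ˢ P).filter (fun z => z.1 - z.2 ∉ P)).filter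
            (fun z => z.1 + b ∈ A ∧ z.2 + b ∈ A)).card : ℝ) := by
      simp only [boole_mul_boole]
      rw [Finset.sum_boole]
    have h2 : ∑ w ∈ A ×ˢ A, (if w.1 - w.2 ∉ P then (1:ℝ) else 0)
        = (((A ×ˢ A).filter (fun w => w.1 - w.2 ∉ P)).card : ℝ) := by
      rw [Finset.sum_boole]
    rw [h1, h2]
    have hcard : (((P ×ˢ P).filter (fun z => z.1 - z.2 ∉ P)).filter
            (fun z => z.1 + b ∈ A ∧ z.2 + b ∈ A)).card
        ≤ ((A ×ˢ A).filter (fun w => w.1 - w.2 ∉ P)).card := by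
      refine Finset.card_le_card_of_injOn (fun z => (z.1 + b, z.2 + b)) ?_ ?_
      · intro z hz
        simp only [Finset.mem_coe, Finset.mem_filter, Finset.mem_product] at hz ⊢
        obtain ⟨⟨-, hnp⟩, ha1, ha2⟩ := hz
        refine ⟨⟨ha1, ha2⟩, ?_⟩
        simpa using hnp
      · intro z1 _ z2 _ h
        have h1 := congrArg Prod.fst h
        have h2 := congrArg Prod.snd h
        simp only at h1 h2
        exact Prod.ext (by linarith) (by linarith)
    exact_mod_cast hcard
  calc ∑ b ∈ A, (∑ z ∈ (P ×ˢ P).filter (fun z => z.1 - z.2 ∉ P),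
        ((if z.1 + b ∈ A then (1:ℝ) else 0) * (if z.2 + b ∈ A then (1:ℝ) else 0)))
      ≤ ∑ _b ∈ A, ∑ w ∈ A ×ˢ A, (if w.1 - w.2 ∉ P then (1:ℝ) else 0) :=
        Finset.sum_le_sum hb
    _ = (A.card : ℝ) * ∑ w ∈ A ×ˢ A, (if w.1 - w.2 ∉ P then (1:ℝ) else 0) := by
        rw [Finset.sum_const, nsmul_eq_mul]
    _ = (A.card : ℝ) * ∑ x ∈ (A - A).filter (fun x => x ∉ P), dd A x := by
        rw [fiberlem A (fun x => if x ∉ P then (1:ℝ) else 0)]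
        congr 1
        rw [Finset.sum_filter]
        refine Finset.sum_congr rfl fun x _ => ?_
        split_ifs <;> simp

private lemma mainlem (A P : Finset ℝ)
    (hP : P = (A - A).filter
      (fun x => (((A ×ˢ A).filter (fun p => x = p.1 - p.2)).card : ℝ) ≥
        (A.card : ℝ) ^ 2 / (11 * ((A - A).card : ℝ)))) :
    (A.card : ℝ) ^ 6 ≤
      2 * (∑ x ∈ A - A, (((A ×ˢ A).filter (fun p => x = p.1 - p.2)).card : ℝ) ^ 3) *
        (∑ x ∈ P, (((P ×ˢ P).filter (fun p => x = p.1 - p.2)).card : ℝ)) := by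
  obtain rfl | hA := A.eq_empty_or_nonempty
  · have hPe : P = ∅ := by simp [hP]
    simp [hPe]
  have hsub : P ⊆ A - A := by rw [hP]; exact Finset.filter_subset _ _
  have hn1 : (1:ℝ) ≤ (A.card : ℝ) := by exact_mod_cast hA.card_pos
  have hn0 : (0:ℝ) < (A.card : ℝ) := lt_of_lt_of_le zero_lt_one hn1
  have hDpos : (0:ℝ) < ((A - A).card : ℝ) := by exact_mod_cast (hA.sub hA).card_pos
  have hE : (∑ x ∈ A - A, (((A ×ˢ A).filter (fun p => x = p.1 - p.2)).card : ℝ) ^ 3)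
      = ∑ x ∈ A - A, dd A x ^ 3 := rfl
  rw [hE, ← S_card P]
  -- tail bound
  have hthr : ∀ x ∈ (A - A).filter (fun x => x ∉ P), dd A x
      ≤ (A.card : ℝ) ^ 2 / (11 * ((A - A).card : ℝ)) := by
    intro x hx
    obtain ⟨hx1, hx2⟩ := Finset.mem_filter.1 hx
    by_contra hcon
    exact hx2 (hP ▸ Finset.mem_filter.2 ⟨hx1, le_of_not_ge hcon⟩)
  have htail : ∑ x ∈ (A - A).filter (fun x => x ∉ P), dd A x ≤ (A.card : ℝ) ^ 2 / 11 := by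
    have h1 := Finset.sum_le_card_nsmul _ _ _ hthr
    have h2 : (((A - A).filter (fun x => x ∉ P)).card
          • ((A.card : ℝ) ^ 2 / (11 * ((A - A).card : ℝ))) : ℝ)
        ≤ ((A - A).card : ℝ) * ((A.card : ℝ) ^ 2 / (11 * ((A - A).card : ℝ))) := by
      rw [nsmul_eq_mul]
      apply mul_le_mul_of_nonneg_right
      · exact_mod_cast Finset.card_filter_le _ _
      · positivity
    have h3 : ((A - A).card : ℝ) * ((A.card : ℝ) ^ 2 / (11 * ((A - A).card : ℝ)))
        = (A.card : ℝ) ^ 2 / 11 := by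
      field_simp
    linarith
  -- sigma lower bound
  have hsplit := Finset.sum_filter_add_sum_filter_not (A - A) (fun x => x ∈ P) (dd A)
  have hPfilter : (A - A).filter (fun x => x ∈ P) = P := by
    rw [Finset.filter_mem_eq_inter, Finset.inter_eq_right.2 hsub]
  rw [hPfilter, sum_dd] at hsplit
  have hsigma : (10/11) * (A.card : ℝ) ^ 2 ≤ ∑ x ∈ P, dd A x := by linarith
  -- first Cauchy–Schwarz
  have hCS1 : (∑ x ∈ P, dd A x) ^ 2
      ≤ (A.card : ℝ) * ∑ b ∈ A, ((A.filter (fun a => a - b ∈ P)).card : ℝ) ^ 2 := by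
    rw [sigma_eq A P hsub]
    exact sq_sum_le_card_mul_sum_sq
  have hq' := q_eq A P
  have hsplit2 := Finset.sum_filter_add_sum_filter_not (P ×ˢ P) (fun z => z.1 - z.2 ∈ P) (gg A)
  rw [← hq'] at hsplit2
  have hbad : ∑ z ∈ (P ×ˢ P).filter (fun z => ¬ z.1 - z.2 ∈ P), gg A z
      ≤ (A.card : ℝ) * ((A.card : ℝ) ^ 2 / 11) :=
    le_trans (bad_le A P) (mul_le_mul_of_nonneg_left htail (le_of_lt hn0))
  -- lower bound on the good part
  have hql : (100/121) * (A.card : ℝ) ^ 3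
      ≤ ∑ b ∈ A, ((A.filter (fun a => a - b ∈ P)).card : ℝ) ^ 2 := by
    have h1 : ((10/11) * (A.card : ℝ) ^ 2) ^ 2 ≤ (∑ x ∈ P, dd A x) ^ 2 :=
      pow_le_pow_left₀ (by positivity) hsigma 2
    have h2 : (A.card : ℝ) * ((100/121) * (A.card : ℝ) ^ 3)
        ≤ (A.card : ℝ) * ∑ b ∈ A, ((A.filter (fun a => a - b ∈ P)).card : ℝ) ^ 2 := by
      nlinarith
    exact le_of_mul_le_mul_left h2 hn0
  have hgood_lb : (89/121) * (A.card : ℝ) ^ 3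
      ≤ ∑ z ∈ (P ×ˢ P).filter (fun z => z.1 - z.2 ∈ P), gg A z := by
    linarith
  -- second Cauchy–Schwarz
  have hCS2 : (∑ z ∈ (P ×ˢ P).filter (fun z => z.1 - z.2 ∈ P), gg A z) ^ 2
      ≤ ((((P ×ˢ P).filter (fun z => z.1 - z.2 ∈ P)).card : ℝ)
        * ∑ z ∈ (P ×ˢ P).filter (fun z => z.1 - z.2 ∈ P), gg A z ^ 2) :=
    sq_sum_le_card_mul_sum_sq
  have hsq_le : ∑ z ∈ (P ×ˢ P).filter (fun z => z.1 - z.2 ∈ P), gg A z ^ 2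
      ≤ ∑ x ∈ A - A, dd A x ^ 3 := by
    rw [← sum_gsq A]
    refine Finset.sum_le_sum_of_subset_of_nonneg ?_ (fun z _ _ => sq_nonneg _)
    exact (Finset.filter_subset _ _).trans (Finset.product_subset_product hsub hsub)
  have hScard0 : (0:ℝ) ≤ (((P ×ˢ P).filter (fun z => z.1 - z.2 ∈ P)).card : ℝ) :=
    Nat.cast_nonneg _
  have hE0 : (0:ℝ) ≤ ∑ x ∈ A - A, dd A x ^ 3 :=
    Finset.sum_nonneg fun x _ => pow_nonneg (Nat.cast_nonneg _) 3
  have hfin : ((89/121) * (A.card : ℝ) ^ 3) ^ 2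
      ≤ (((P ×ˢ P).filter (fun z => z.1 - z.2 ∈ P)).card : ℝ)
        * ∑ x ∈ A - A, dd A x ^ 3 := by
    calc ((89/121) * (A.card : ℝ) ^ 3) ^ 2
        ≤ (∑ z ∈ (P ×ˢ P).filter (fun z => z.1 - z.2 ∈ P), gg A z) ^ 2 :=
          pow_le_pow_left₀ (by positivity) hgood_lb 2
      _ ≤ (((P ×ˢ P).filter (fun z => z.1 - z.2 ∈ P)).card : ℝ)
          * ∑ z ∈ (P ×ˢ P).filter (fun z => z.1 - z.2 ∈ P), gg A z ^ 2 := hCS2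
      _ ≤ _ := mul_le_mul_of_nonneg_left hsq_le hScard0
  nlinarith [hfin, hScard0, hE0, pow_pos hn0 6]

theorem stmt4 :
    ∃ c : ℝ, 0 < c ∧ ∀ A : Finset ℝ,
      ∀ P : Finset ℝ,
        P = (A - A).filter
          (fun x => (((A ×ˢ A).filter (fun p => x = p.1 - p.2)).card : ℝ) ≥
            (A.card : ℝ) ^ 2 / (11 * ((A - A).card : ℝ))) →
        (A.card : ℝ) ^ 6 ≤
          c * (∑ x ∈ A - A, (((A ×ˢ A).filter (fun p => x = p.1 - p.2)).card : ℝ) ^ 3) *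
            (∑ x ∈ P, (((P ×ˢ P).filter (fun p => x = p.1 - p.2)).card : ℝ)) := by
  exact ⟨2, by norm_num, fun A P hP => mainlem A P hP⟩
end

section
/- Let X be a finite set of reals with |X| ≥ 2 and L ≥ 1 a real number. Define P = {y ∈ X+X : σ_X(y) ≥ |X|²/(8|X+X|·L)} and R = {x ∈ X : |(X+x) ∩ P| ≥ (3/4)|X|}. Then |R| ≥ (1 − 1/(2L))·|X|. -/
open Finset Pointwise

private lemma aux_div1 (c n L : ℝ) (hc : c ≠ 0) (hL : L ≠ 0) :
    c * (n ^ 2 / (8 * c * L)) = n ^ 2 / (8 * L) := by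
  field_simp

private lemma aux_div2 (n L : ℝ) (hL : L ≠ 0) :
    (1 - 1 / (2 * L)) * n = n - n / (2 * L) := by
  field_simp

theorem stmt13 (X : Finset ℝ) (hX : 2 ≤ X.card) (L : ℝ) (hL : 1 ≤ L)
    (P R : Finset ℝ)
    (hP : P = (X + X).filter
      (fun y => (((X ×ˢ X).filter (fun p => p.1 + p.2 = y)).card : ℝ) ≥
        (X.card : ℝ) ^ 2 / (8 * ((X + X).card : ℝ) * L)))
    (hR : R = X.filter
      (fun x => (((X.image (fun x' => x' + x)) ∩ P).card : ℝ) ≥ (3 / 4) * (X.card : ℝ))) :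
    (R.card : ℝ) ≥ (1 - 1 / (2 * L)) * (X.card : ℝ) := by
  have hXpos : 0 < X.card := by omega
  have hXne : X.Nonempty := Finset.card_pos.mp hXpos
  have hSne : (X + X).Nonempty := hXne.add hXne
  have hSpos : (0:ℝ) < ((X + X).card : ℝ) := by exact_mod_cast Finset.card_pos.mpr hSne
  have hLpos : (0:ℝ) < L := lt_of_lt_of_le one_pos hL
  have hnpos : (0:ℝ) < (X.card : ℝ) := by exact_mod_cast hXpos
  set bound : ℝ := (X.card : ℝ) ^ 2 / (8 * ((X + X).card : ℝ) * L) with hbound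
  set B : Finset (ℝ × ℝ) := (X ×ˢ X).filter (fun p => p.1 + p.2 ∉ P) with hBdef
  -- Upper bound on B.card
  have hBfib : B.card = ∑ y ∈ (X + X) \ P, (B.filter (fun p => p.1 + p.2 = y)).card := by
    apply Finset.card_eq_sum_card_fiberwise
    intro p hp
    rw [Finset.mem_coe, hBdef, Finset.mem_filter, Finset.mem_product] at hp
    rw [Finset.mem_coe, Finset.mem_sdiff]
    exact ⟨Finset.add_mem_add hp.1.1 hp.1.2, hp.2⟩
  have hσle : ∀ y ∈ (X + X) \ P,
      ((B.filter (fun p => p.1 + p.2 = y)).card : ℝ) ≤ bound := by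
    intro y hy
    rw [Finset.mem_sdiff] at hy
    have h1 : (B.filter (fun p => p.1 + p.2 = y)).card ≤
        ((X ×ˢ X).filter (fun p => p.1 + p.2 = y)).card := by
      apply Finset.card_le_card
      intro p hp
      rw [Finset.mem_filter] at hp ⊢
      rw [hBdef, Finset.mem_filter] at hp
      exact ⟨hp.1.1, hp.2⟩
    have h2 : ¬ ((((X ×ˢ X).filter (fun p => p.1 + p.2 = y)).card : ℝ) ≥ bound) := by
      intro hge
      apply hy.2
      rw [hP, Finset.mem_filter]
      exact ⟨hy.1, hge⟩
    push_neg at h2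
    calc ((B.filter (fun p => p.1 + p.2 = y)).card : ℝ)
        ≤ (((X ×ˢ X).filter (fun p => p.1 + p.2 = y)).card : ℝ) := by exact_mod_cast h1
      _ ≤ bound := le_of_lt h2
  have hBupper : (B.card : ℝ) ≤ (X.card : ℝ) ^ 2 / (8 * L) := by
    have : (B.card : ℝ) ≤ (((X + X) \ P).card : ℝ) * bound := by
      rw [hBfib]
      push_cast
      calc ∑ y ∈ (X + X) \ P, ((B.filter (fun p => p.1 + p.2 = y)).card : ℝ)
          ≤ ∑ _y ∈ (X + X) \ P, bound := Finset.sum_le_sum hσle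
        _ = (((X + X) \ P).card : ℝ) * bound := by rw [Finset.sum_const, nsmul_eq_mul]
    have hcard : (((X + X) \ P).card : ℝ) ≤ ((X + X).card : ℝ) := by
      exact_mod_cast Finset.card_le_card (Finset.sdiff_subset)
    have hbpos : 0 ≤ bound := by
      rw [hbound]
      exact div_nonneg (sq_nonneg _)
        (mul_nonneg (mul_nonneg (by norm_num) hSpos.le) hLpos.le)
    have : (B.card : ℝ) ≤ ((X + X).card : ℝ) * bound :=
      le_trans this (mul_le_mul_of_nonneg_right hcard hbpos)
    rw [hbound] at this
    calc (B.card : ℝ) ≤ ((X + X).card : ℝ) * ((X.card : ℝ) ^ 2 / (8 * ((X + X).card : ℝ) * L)) := this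
      _ = (X.card : ℝ) ^ 2 / (8 * L) := aux_div1 _ _ _ hSpos.ne' hLpos.ne'
  -- Lower bound on B.card
  set T : ℝ → Finset ℝ := fun x => X.filter (fun x' => x' + x ∉ P) with hTdef
  have hTlb : ∀ x ∈ X \ R, ((X.card : ℝ)) / 4 ≤ ((T x).card : ℝ) := by
    intro x hx
    rw [Finset.mem_sdiff] at hx
    have himg : X.image (fun x' => x' + x) ∩ P =
        (X.filter (fun x' => x' + x ∈ P)).image (fun x' => x' + x) := by
      ext y
      simp only [Finset.mem_inter, Finset.mem_image, Finset.mem_filter]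
      constructor
      · rintro ⟨⟨x', hx', rfl⟩, hyP⟩
        exact ⟨x', ⟨hx', hyP⟩, rfl⟩
      · rintro ⟨x', ⟨hx', hP'⟩, rfl⟩
        exact ⟨⟨x', hx', rfl⟩, hP'⟩
    have hinj : Function.Injective (fun x' : ℝ => x' + x) := add_left_injective x
    have hcard1 : (X.image (fun x' => x' + x) ∩ P).card =
        (X.filter (fun x' => x' + x ∈ P)).card := by
      rw [himg, Finset.card_image_of_injective _ hinj]
    have hnotR : ¬ (((X.image (fun x' => x' + x) ∩ P).card : ℝ) ≥ (3 / 4) * (X.card : ℝ)) := by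
      intro hge
      apply hx.2
      rw [hR, Finset.mem_filter]
      exact ⟨hx.1, hge⟩
    push_neg at hnotR
    rw [hcard1] at hnotR
    have hsplit : (X.filter (fun x' => x' + x ∈ P)).card + (T x).card = X.card := by
      rw [hTdef]
      exact Finset.card_filter_add_card_filter_not (fun x' => x' + x ∈ P)
    have : ((X.filter (fun x' => x' + x ∈ P)).card : ℝ) + ((T x).card : ℝ) = (X.card : ℝ) := by
      exact_mod_cast hsplit
    linarith
  set B' : Finset (ℝ × ℝ) := B.filter (fun p => p.2 ∈ X \ R) with hB'def
  have hB'fib : B'.card = ∑ x ∈ X \ R, (B'.filter (fun p => p.2 = x)).card := by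
    apply Finset.card_eq_sum_card_fiberwise
    intro p hp
    rw [Finset.mem_coe, hB'def, Finset.mem_filter] at hp
    exact hp.2
  have hfibeq : ∀ x ∈ X \ R, (B'.filter (fun p => p.2 = x)).card = (T x).card := by
    intro x hx
    apply Finset.card_bij (fun p _ => p.1)
    · intro p hp
      rw [Finset.mem_filter] at hp
      obtain ⟨hp1, hp2⟩ := hp
      rw [hB'def, Finset.mem_filter] at hp1
      obtain ⟨hpB, _⟩ := hp1
      rw [hBdef, Finset.mem_filter, Finset.mem_product] at hpB
      rw [hTdef]
      simp only [Finset.mem_filter]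
      refine ⟨hpB.1.1, ?_⟩
      rw [← hp2]
      exact hpB.2
    · intro p hp q hq heq
      rw [Finset.mem_filter] at hp hq
      exact Prod.ext heq (hp.2.trans hq.2.symm)
    · intro x' hx'
      rw [hTdef, Finset.mem_filter] at hx'
      refine ⟨(x', x), ?_, rfl⟩
      rw [Finset.mem_filter, hB'def, Finset.mem_filter, hBdef, Finset.mem_filter,
        Finset.mem_product]
      rw [Finset.mem_sdiff] at hx
      exact ⟨⟨⟨⟨hx'.1, hx.1⟩, hx'.2⟩, by rw [Finset.mem_sdiff]; exact hx⟩, rfl⟩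
  have hBlower : (((X \ R).card : ℝ)) * ((X.card : ℝ) / 4) ≤ (B.card : ℝ) := by
    have h1 : (B'.card : ℝ) = ∑ x ∈ X \ R, ((T x).card : ℝ) := by
      rw [hB'fib]
      push_cast
      exact Finset.sum_congr rfl (fun x hx => by exact_mod_cast congrArg Nat.cast (hfibeq x hx))
    have h2 : (((X \ R).card : ℝ)) * ((X.card : ℝ) / 4) ≤ ∑ x ∈ X \ R, ((T x).card : ℝ) := by
      calc (((X \ R).card : ℝ)) * ((X.card : ℝ) / 4)
          = ∑ _x ∈ X \ R, ((X.card : ℝ) / 4) := by rw [Finset.sum_const, nsmul_eq_mul]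
        _ ≤ ∑ x ∈ X \ R, ((T x).card : ℝ) := Finset.sum_le_sum hTlb
    have h3 : (B'.card : ℝ) ≤ (B.card : ℝ) := by
      exact_mod_cast Finset.card_le_card (Finset.filter_subset _ _)
    linarith
  -- Combine
  have hRsub : R ⊆ X := by rw [hR]; exact Finset.filter_subset _ _
  have hsdiff : ((X \ R).card : ℝ) = (X.card : ℝ) - (R.card : ℝ) := by
    rw [Finset.card_sdiff_of_subset hRsub]
    have := Finset.card_le_card hRsub
    push_cast [Nat.cast_sub this]
    ring
  have hm : ((X \ R).card : ℝ) ≤ (X.card : ℝ) / (2 * L) := by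
    have key : (((X \ R).card : ℝ)) * ((X.card : ℝ) / 4) ≤ (X.card : ℝ) ^ 2 / (8 * L) :=
      le_trans hBlower hBupper
    have h8L : (0:ℝ) < 8 * L := by linarith
    rw [le_div_iff₀ h8L] at key
    rw [le_div_iff₀ (mul_pos two_pos hLpos)]
    nlinarith [key, hnpos]
  have h1 : (1 - 1 / (2 * L)) * (X.card : ℝ) = (X.card : ℝ) - (X.card : ℝ) / (2 * L) :=
    aux_div2 _ _ hLpos.ne'
  linarith [hsdiff, hm, h1.ge]
end
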